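/- Let ω ∈ ℤ[X] be a polynomial of degree k ≥ 2 and suppose there are reals s, t > 0 such that for every δ > 0 there is a constant C_δ with ∫₀¹∫₀¹ W_ω(u, v; N)^{2s} du dv ≤ C_δ·N^{2s − t + δ} for all positive integers N. Then for every 0 < α < 1 and every δ > 0 there is a constant C'_δ such that for all positive integers N, the Lebesgue measure of the set { y ∈ [0,1) : there exists x ∈ [0,1) with W_ω(x, y; N) ≥ N^α } is at most C'_δ·N^{2s(1−α) − t + 2 − α + δ}. -/

import Mathlib

open MeasureTheory Finset Polynomial

/-- `e(t) = exp(2πit)`. -/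
noncomputable def e (t : ℝ) : ℂ := Complex.exp (2 * Real.pi * Complex.I * t)

/-- The Weyl sum `S_ω(x, y; N) = ∑_{n=1}^{N} e(x·n + y·ω(n))`. -/
noncomputable def WeylS (ω : Polynomial ℤ) (x y : ℝ) (N : ℕ) : ℂ :=
  ∑ n ∈ Finset.Icc 1 N, e (x * (n : ℝ) + y * ((ω.eval (n : ℤ) : ℤ) : ℝ))

/-- `η(k)` from the paper. -/
def etaP (k : ℕ) : ℕ :=
  if 2 * k + 2 ≥ (Nat.sqrt (2 * k + 2)) ^ 2 + Nat.sqrt (2 * k + 2) then 0 else 1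

/-- `s₀(k)` from the paper. -/
def s0 (k : ℕ) : ℕ :=
  if k = 2 then 3 else if k = 3 then 5 else if k = 4 then 8 else if k = 5 then 12
  else if k = 6 then 18 else if k = 7 then 24 else if k = 8 then 31 else if k = 9 then 40
  else if k = 10 then 49 else k * (k - 1) / 2 + Nat.sqrt (2 * k + 2) - etaP k

/-- The completed sum
`W_ω(x, y; N) = ∑_{h=−N}^{N} (1/(|h|+1))·|∑_{n=1}^{N} e(h·n/N + x·n + y·ω(n))|`. -/
noncomputable def WeylW (ω : Polynomial ℤ) (x y : ℝ) (N : ℕ) : ℝ :=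
  ∑ h ∈ Finset.Icc (-(N : ℤ)) (N : ℤ), (1 / (|(h : ℝ)| + 1)) *
    ‖(∑ n ∈ Finset.Icc 1 N,
      e ((h : ℝ) * (n : ℝ) / (N : ℝ) + x * (n : ℝ) + y * ((ω.eval (n : ℤ) : ℤ) : ℝ)))‖

/-! ### Auxiliary lemmas -/

lemma e_hasDerivAt (t : ℝ) :
    HasDerivAt e (e t * (2 * Real.pi * Complex.I)) t := by
  have h0 : HasDerivAt (fun x : ℝ => ((x : ℝ) : ℂ)) 1 t := by
    simpa using (hasDerivAt_id t).ofReal_comp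
  have h1 : HasDerivAt (fun x : ℝ => 2 * Real.pi * Complex.I * x) (2 * Real.pi * Complex.I) t := by
    simpa using h0.const_mul (2 * Real.pi * Complex.I)
  exact h1.cexp

lemma abs_e_val (t : ℝ) : ‖(e t)‖ = 1 := by
  have h : (2 * (Real.pi:ℂ) * Complex.I * t) = ((2 * Real.pi * t : ℝ) : ℂ) * Complex.I := by
    push_cast; ring
  rw [e, h]
  exact Complex.norm_exp_ofReal_mul_I _

lemma abs_e_sub_e (a b : ℝ) : ‖(e a - e b)‖ ≤ 2 * Real.pi * |a - b| := by
  have key := Convex.norm_image_sub_le_of_norm_hasDerivWithin_le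
    (f := e) (f' := fun t => e t * (2 * Real.pi * Complex.I)) (s := Set.univ) (C := 2 * Real.pi)
    (fun x _ => (e_hasDerivAt x).hasDerivWithinAt) ?_ convex_univ (Set.mem_univ b) (Set.mem_univ a)
  · simpa [Real.norm_eq_abs] using key
  · intro x _
    have h1 : ‖e x * (2 * (Real.pi:ℂ) * Complex.I)‖ = 2 * Real.pi := by
      rw [norm_mul, norm_mul, norm_mul]
      simp [abs_e_val x, abs_of_nonneg Real.pi_pos.le]
    simp only [h1, le_refl]

lemma weight_sum_eq (N : ℕ) :
    ∑ h ∈ Finset.Icc (-(N : ℤ)) (N : ℤ), (1 / (|(h : ℝ)| + 1))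
      = 2 * ((harmonic (N+1) : ℚ) : ℝ) - 1 := by
  induction N with
  | zero => simp [harmonic]; norm_num
  | succ N ih =>
    have h1 : (-(↑(N+1) : ℤ)) ∉ Finset.Icc (-(N:ℤ)) (N:ℤ) := by
      simp only [Finset.mem_Icc]; omega
    have h2 : ((N:ℤ)+1) ∉ insert (-(↑(N+1) : ℤ)) (Finset.Icc (-(N:ℤ)) (N:ℤ)) := by
      simp only [Finset.mem_insert, Finset.mem_Icc]; omega
    have hset : Finset.Icc (-(↑(N+1) : ℤ)) (↑(N+1) : ℤ)
        = insert ((N:ℤ)+1) (insert (-(↑(N+1) : ℤ)) (Finset.Icc (-(N:ℤ)) (N:ℤ))) := by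
      ext h; simp only [Finset.mem_Icc, Finset.mem_insert]; omega
    rw [hset, Finset.sum_insert h2, Finset.sum_insert h1, ih,
      show harmonic (N+1+1) = harmonic (N+1) + (((N:ℚ)+1)+1)⁻¹ by
        simpa using harmonic_succ (N+1)]
    push_cast
    rw [show |(-((N:ℝ)+1))| = (N:ℝ)+1 by rw [abs_neg]; exact abs_of_nonneg (by positivity),
      show |((N:ℝ)+1)| = (N:ℝ)+1 from abs_of_nonneg (by positivity)]
    have hne : (N:ℝ)+1+1 ≠ 0 := by positivity
    field_simp
    ring

lemma weight_sum_le (N : ℕ) :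
    ∑ h ∈ Finset.Icc (-(N : ℤ)) (N : ℤ), (1 / (|(h : ℝ)| + 1))
      ≤ 2 * (1 + Real.log (N+1)) := by
  rw [weight_sum_eq]
  have := harmonic_le_one_add_log (N+1)
  have h2 : ((N:ℝ)+1) = ((N+1 : ℕ) : ℝ) := by push_cast; ring
  rw [h2]
  linarith

lemma weylW_lip (ω : Polynomial ℤ) (y : ℝ) (N : ℕ) (x x' : ℝ) :
    |WeylW ω x y N - WeylW ω x' y N|
      ≤ 2 * (1 + Real.log (N+1)) * (2 * Real.pi * N^2) * |x - x'| := by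
  have key : ∀ h : ℤ,
      |‖(∑ n ∈ Finset.Icc 1 N,
          e ((h : ℝ) * (n : ℝ) / (N : ℝ) + x * (n : ℝ) + y * ((ω.eval (n : ℤ) : ℤ) : ℝ)))‖
        - ‖(∑ n ∈ Finset.Icc 1 N,
          e ((h : ℝ) * (n : ℝ) / (N : ℝ) + x' * (n : ℝ) + y * ((ω.eval (n : ℤ) : ℤ) : ℝ)))‖|
        ≤ 2 * Real.pi * N^2 * |x - x'| := by
    intro h
    set A := ∑ n ∈ Finset.Icc 1 N,
          e ((h : ℝ) * (n : ℝ) / (N : ℝ) + x * (n : ℝ) + y * ((ω.eval (n : ℤ) : ℤ) : ℝ)) with hA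
    set B := ∑ n ∈ Finset.Icc 1 N,
          e ((h : ℝ) * (n : ℝ) / (N : ℝ) + x' * (n : ℝ) + y * ((ω.eval (n : ℤ) : ℤ) : ℝ)) with hB
    have h0 : |‖A‖ - ‖B‖| ≤ ‖A - B‖ := by
      exact abs_norm_sub_norm_le A B
    refine h0.trans ?_
    rw [hA, hB, ← Finset.sum_sub_distrib]
    refine (norm_sum_le _ _).trans ?_
    have hterm : ∀ n ∈ Finset.Icc 1 N,
        ‖e ((h : ℝ) * n / N + x * n + y * ((ω.eval (n : ℤ) : ℤ) : ℝ))
          - e ((h : ℝ) * n / N + x' * n + y * ((ω.eval (n : ℤ) : ℤ) : ℝ))‖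
        ≤ 2 * Real.pi * N * |x - x'| := by
      intro n hn
      refine (abs_e_sub_e _ _).trans ?_
      have : ((h : ℝ) * n / N + x * n + y * ((ω.eval (n : ℤ) : ℤ) : ℝ))
          - ((h : ℝ) * n / N + x' * n + y * ((ω.eval (n : ℤ) : ℤ) : ℝ)) = (x - x') * n := by ring
      rw [this, abs_mul, Nat.abs_cast]
      have hnN : (n : ℝ) ≤ N := by
        exact_mod_cast (Finset.mem_Icc.mp hn).2
      calc 2 * Real.pi * (|x - x'| * n) ≤ 2 * Real.pi * (|x - x'| * N) := by
            have := Real.pi_pos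
            gcongr
        _ = 2 * Real.pi * N * |x - x'| := by ring
    refine (Finset.sum_le_sum hterm).trans ?_
    rw [Finset.sum_const, Nat.card_Icc]
    simp only [nsmul_eq_mul]
    have hcard : ((N + 1 - 1 : ℕ) : ℝ) ≤ (N : ℝ) := by simp
    have := Real.pi_pos
    calc ((N + 1 - 1 : ℕ) : ℝ) * (2 * Real.pi * N * |x - x'|)
        ≤ (N:ℝ) * (2 * Real.pi * N * |x - x'|) := by gcongr
      _ = 2 * Real.pi * N^2 * |x - x'| := by ring
  unfold WeylW
  rw [← Finset.sum_sub_distrib]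
  refine (Finset.abs_sum_le_sum_abs _ _).trans ?_
  have step : ∀ h ∈ Finset.Icc (-(N : ℤ)) (N : ℤ),
      |(1 / (|(h : ℝ)| + 1)) * ‖(∑ n ∈ Finset.Icc 1 N,
          e ((h : ℝ) * (n : ℝ) / (N : ℝ) + x * (n : ℝ) + y * ((ω.eval (n : ℤ) : ℤ) : ℝ)))‖
        - (1 / (|(h : ℝ)| + 1)) * ‖(∑ n ∈ Finset.Icc 1 N,
          e ((h : ℝ) * (n : ℝ) / (N : ℝ) + x' * (n : ℝ) + y * ((ω.eval (n : ℤ) : ℤ) : ℝ)))‖|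
      ≤ (1 / (|(h : ℝ)| + 1)) * (2 * Real.pi * N^2 * |x - x'|) := by
    intro h _
    rw [← mul_sub, abs_mul]
    have hw : |1 / (|(h : ℝ)| + 1)| = 1 / (|(h : ℝ)| + 1) := abs_of_nonneg (by positivity)
    rw [hw]
    exact mul_le_mul_of_nonneg_left (key h) (by positivity)
  refine (Finset.sum_le_sum step).trans ?_
  rw [← Finset.sum_mul]
  have hws := weight_sum_le N
  have h2 : (0:ℝ) ≤ 2 * Real.pi * N^2 * |x - x'| := by positivity
  calc (∑ h ∈ Finset.Icc (-(N : ℤ)) (N : ℤ), (1 / (|(h : ℝ)| + 1))) * (2 * Real.pi * N^2 * |x - x'|)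
      ≤ 2 * (1 + Real.log (N+1)) * (2 * Real.pi * N^2 * |x - x'|) :=
        mul_le_mul_of_nonneg_right hws h2
    _ = 2 * (1 + Real.log (N+1)) * (2 * Real.pi * N^2) * |x - x'| := by ring

lemma e_continuous : Continuous e := by
  unfold e; fun_prop

lemma weylW_nonneg (ω : Polynomial ℤ) (x y : ℝ) (N : ℕ) : 0 ≤ WeylW ω x y N := by
  apply Finset.sum_nonneg
  intro h _
  positivity

lemma weylW_le (ω : Polynomial ℤ) (x y : ℝ) (N : ℕ) : WeylW ω x y N ≤ 3 * N^2 := by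
  have hterm : ∀ h ∈ Finset.Icc (-(N : ℤ)) (N : ℤ),
      (1 / (|(h : ℝ)| + 1)) * ‖(∑ n ∈ Finset.Icc 1 N,
        e ((h : ℝ) * (n : ℝ) / (N : ℝ) + x * (n : ℝ) + y * ((ω.eval (n : ℤ) : ℤ) : ℝ)))‖ ≤ N := by
    intro h _
    have h1 : (1 / (|(h : ℝ)| + 1)) ≤ 1 := by
      rw [div_le_one (by positivity)]; have := abs_nonneg (h:ℝ); linarith
    have h2 : ‖(∑ n ∈ Finset.Icc 1 N,
        e ((h : ℝ) * (n : ℝ) / (N : ℝ) + x * (n : ℝ) + y * ((ω.eval (n : ℤ) : ℤ) : ℝ)))‖ ≤ N := by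
      refine (norm_sum_le _ _).trans ?_
      have : ∀ n ∈ Finset.Icc 1 N, ‖e ((h : ℝ) * (n : ℝ) / (N : ℝ) + x * (n : ℝ)
          + y * ((ω.eval (n : ℤ) : ℤ) : ℝ))‖ = 1 := fun n _ => by
        rw [abs_e_val]
      rw [Finset.sum_congr rfl this, Finset.sum_const, Nat.card_Icc]
      simp
    calc (1 / (|(h : ℝ)| + 1)) * ‖_‖ ≤ 1 * (N:ℝ) := by
          apply mul_le_mul h1 h2 (by positivity) zero_le_one
      _ = N := one_mul _
  refine (Finset.sum_le_sum hterm).trans ?_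
  rw [Finset.sum_const, Int.card_Icc]
  simp only [nsmul_eq_mul]
  have hcard : ((N:ℤ) + 1 - -(N:ℤ)).toNat = 2*N+1 := by omega
  rw [hcard]
  push_cast
  rcases Nat.eq_zero_or_pos N with h0 | h0
  · simp [h0]
  · have h1 : (1:ℝ) ≤ (N:ℝ) := by exact_mod_cast h0
    nlinarith

lemma weylW_continuous (ω : Polynomial ℤ) (N : ℕ) :
    Continuous fun p : ℝ × ℝ => WeylW ω p.1 p.2 N := by
  unfold WeylW
  apply continuous_finset_sum
  intro h _
  apply Continuous.mul continuous_const
  apply continuous_norm.comp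
  apply continuous_finset_sum
  intro n _
  apply e_continuous.comp
  fun_prop

lemma integral_lower (f : ℝ → ℝ) (hf : Continuous f) (hpos : ∀ u, 0 ≤ f u)
    (a ℓ c₀ : ℝ) (h0 : 0 ≤ a) (hl : 0 < ℓ) (h1 : a + ℓ ≤ 1)
    (hc : ∀ u ∈ Set.Ioc a (a+ℓ), c₀ ≤ f u) :
    ℓ * c₀ ≤ ∫ u in Set.Ioc (0:ℝ) 1, f u := by
  have hint : IntegrableOn f (Set.Ioc (0:ℝ) 1) := hf.integrableOn_Ioc
  have hintI : IntegrableOn f (Set.Ioc a (a+ℓ)) := hf.integrableOn_Ioc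
  have hsub : Set.Ioc a (a+ℓ) ⊆ Set.Ioc (0:ℝ) 1 :=
    Set.Ioc_subset_Ioc h0 h1
  have step1 : (∫ u in Set.Ioc a (a+ℓ), f u) ≤ ∫ u in Set.Ioc (0:ℝ) 1, f u := by
    apply setIntegral_mono_set hint (ae_of_all _ hpos) (HasSubset.Subset.eventuallyLE hsub)
  refine le_trans ?_ step1
  have step2 : (∫ u in Set.Ioc a (a+ℓ), (c₀ : ℝ)) ≤ ∫ u in Set.Ioc a (a+ℓ), f u := by
    apply setIntegral_mono_on _ hintI measurableSet_Ioc hc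
    exact integrableOn_const (by simp [Real.volume_Ioc])
  refine le_trans (le_of_eq ?_) step2
  rw [setIntegral_const, Real.volume_real_Ioc_of_le (by linarith), smul_eq_mul]
  ring

lemma fubini_swap_box (f : ℝ → ℝ → ℝ) (hf : Continuous fun p : ℝ × ℝ => f p.1 p.2) :
    (∫ u in (0:ℝ)..1, ∫ v in (0:ℝ)..1, f u v) = ∫ v in (0:ℝ)..1, ∫ u in (0:ℝ)..1, f u v := by
  simp_rw [intervalIntegral.integral_of_le (zero_le_one (α := ℝ))]
  apply integral_integral_swap
  rw [Measure.prod_restrict]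
  apply IntegrableOn.mono_set (t := Set.Icc (0:ℝ) 1 ×ˢ Set.Icc (0:ℝ) 1)
  · exact hf.continuousOn.integrableOn_compact (isCompact_Icc.prod isCompact_Icc)
  · exact Set.prod_mono Set.Ioc_subset_Icc_self Set.Ioc_subset_Icc_self

lemma log_bound (N : ℕ) (hN : 0 < N) (δ : ℝ) (hδ : 0 < δ) :
    1 + Real.log (N+1) ≤ (2 + 4/δ) * (N:ℝ) ^ (δ/2) := by
  have hN1 : (1:ℝ) ≤ N := by exact_mod_cast hN
  have hNpos : (0:ℝ) < N := by positivity
  have h1 : Real.log (N+1) ≤ 1 + Real.log N := by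
    have : (N:ℝ) + 1 ≤ 2 * N := by linarith
    calc Real.log (N+1) ≤ Real.log (2*N) :=
          Real.log_le_log (by positivity) this
      _ = Real.log 2 + Real.log N := Real.log_mul (by norm_num) (by positivity)
      _ ≤ 1 + Real.log N := by
          have := Real.log_le_sub_one_of_pos (x := 2) (by norm_num)
          linarith
  have h2 : Real.log N ≤ (2/δ) * (N:ℝ)^(δ/2) := by
    have hr : Real.log ((N:ℝ)^(δ/2)) = (δ/2) * Real.log N := Real.log_rpow hNpos _
    have h3 : Real.log ((N:ℝ)^(δ/2)) ≤ (N:ℝ)^(δ/2) := by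
      have := Real.log_le_sub_one_of_pos (x := (N:ℝ)^(δ/2)) (by positivity)
      linarith [Real.rpow_nonneg hNpos.le (δ/2)]
    rw [hr] at h3
    calc Real.log N = (2/δ) * ((δ/2) * Real.log N) := by field_simp
      _ ≤ (2/δ) * (N:ℝ)^(δ/2) := by
          apply mul_le_mul_of_nonneg_left h3 (by positivity)
  have h4 : (1:ℝ) ≤ (N:ℝ)^(δ/2) := Real.one_le_rpow hN1 (by positivity)
  have hb : (2/δ) * (N:ℝ)^(δ/2) ≤ (4/δ) * (N:ℝ)^(δ/2) :=
    mul_le_mul_of_nonneg_right ((div_le_div_iff_of_pos_right hδ).mpr (by norm_num)) (by linarith)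
  have hexp : (2 + 4/δ) * (N:ℝ)^(δ/2) = 2 * (N:ℝ)^(δ/2) + (4/δ) * (N:ℝ)^(δ/2) := by ring
  linarith

set_option maxHeartbeats 1000000 in
theorem measure_of_large_values_projection
    (k : ℕ) (hk : 2 ≤ k) (ω : Polynomial ℤ) (hω : ω.natDegree = k)
    (s t : ℝ) (hs : 0 < s) (ht : 0 < t)
    (hmean : ∀ δ : ℝ, 0 < δ → ∃ Cδ : ℝ, ∀ N : ℕ, 0 < N →
      (∫ u in (0 : ℝ)..1, ∫ v in (0 : ℝ)..1, WeylW ω u v N ^ (2 * s)) ≤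
        Cδ * (N : ℝ) ^ (2 * s - t + δ))
    (α : ℝ) (hα0 : 0 < α) (hα1 : α < 1) (δ : ℝ) (hδ : 0 < δ) :
    ∃ C' : ℝ, ∀ N : ℕ, 0 < N →
      volume {y : ℝ | y ∈ Set.Ico (0 : ℝ) 1 ∧
          ∃ x ∈ Set.Ico (0 : ℝ) 1, (N : ℝ) ^ α ≤ WeylW ω x y N} ≤
        ENNReal.ofReal (C' * (N : ℝ) ^ (2 * s * (1 - α) - t + 2 - α + δ)) := by
  have hs2 : (0:ℝ) ≤ 2 * s := by linarith
  obtain ⟨Cδ, hCδ⟩ := hmean (δ/2) (by positivity)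
  -- Cδ is nonnegative
  have hCδ0 : 0 ≤ Cδ := by
    have h00 : (0:ℝ) ≤ ∫ u in (0:ℝ)..1, ∫ v in (0:ℝ)..1, WeylW ω u v 1 ^ (2*s) := by
      apply intervalIntegral.integral_nonneg zero_le_one
      intro u _
      apply intervalIntegral.integral_nonneg zero_le_one
      intro v _
      exact Real.rpow_nonneg (weylW_nonneg ω u v 1) _
    have h01 := hCδ 1 one_pos
    simp only [Nat.cast_one, Real.one_rpow, mul_one] at h01
    linarith
  refine ⟨Cδ * ((2:ℝ)^(2*s) * 8 * Real.pi * (2 + 4/δ)), ?_⟩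
  intro N hN
  have hNpos : (0:ℝ) < N := by exact_mod_cast hN
  have hN1 : (1:ℝ) ≤ N := by exact_mod_cast hN
  have hπ := Real.pi_pos
  have hπ3 := Real.pi_gt_three
  have hlog0 : 0 ≤ Real.log ((N:ℝ)+1) := Real.log_nonneg (by linarith)
  set lg : ℝ := 1 + Real.log ((N:ℝ)+1) with hlgdef
  have hlg1 : 1 ≤ lg := by simp only [hlgdef]; linarith
  set L : ℝ := 2 * lg * (2 * Real.pi * (N:ℝ)^2) with hLdef
  have hLpos : 0 < L := by
    apply mul_pos (by linarith) (by positivity)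
  have hNα_pos : (0:ℝ) < (N:ℝ)^α := Real.rpow_pos_of_pos hNpos _
  have hNα_le : (N:ℝ)^α ≤ N := by
    calc (N:ℝ)^α ≤ (N:ℝ)^(1:ℝ) := Real.rpow_le_rpow_of_exponent_le hN1 hα1.le
      _ = N := Real.rpow_one _
  have hNL : (N:ℝ) ≤ L := by
    have h12 : 12 * (N:ℝ)^2 ≤ L := by
      rw [hLdef]
      have hπlg : Real.pi ≤ Real.pi * lg := le_mul_of_one_le_right hπ.le hlg1
      nlinarith [sq_nonneg ((N:ℝ)), mul_le_mul_of_nonneg_right hπlg (sq_nonneg ((N:ℝ))), hπ3]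
    nlinarith
  set ℓ : ℝ := (N:ℝ)^α / (2 * L) with hℓdef
  have hℓpos : 0 < ℓ := div_pos hNα_pos (by linarith)
  have hℓhalf : ℓ ≤ 1/2 := by
    rw [hℓdef, div_le_iff₀ (by linarith)]
    calc (N:ℝ)^α ≤ N := hNα_le
      _ ≤ L := hNL
      _ = 1/2 * (2 * L) := by ring
  set c₀ : ℝ := ((N:ℝ)^α / 2) ^ (2*s) with hc₀def
  have hc₀pos : 0 < c₀ := Real.rpow_pos_of_pos (by positivity) _
  have hcpos : 0 < ℓ * c₀ := mul_pos hℓpos hc₀pos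
  have hLℓ : L * ℓ = (N:ℝ)^α / 2 := by
    rw [hℓdef]; field_simp
  -- continuity of the squared Weyl sum
  have hfcont : Continuous fun p : ℝ × ℝ => WeylW ω p.1 p.2 N ^ (2*s) :=
    (weylW_continuous ω N).rpow_const (fun p => Or.inr hs2)
  -- the key lower bound for the x-integral
  have hFlow : ∀ y : ℝ, (∃ x ∈ Set.Ico (0:ℝ) 1, (N:ℝ)^α ≤ WeylW ω x y N) →
      ℓ * c₀ ≤ ∫ u in Set.Ioc (0:ℝ) 1, WeylW ω u y N ^ (2*s) := by
    rintro y ⟨x₀, hx₀, hWx⟩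
    obtain ⟨a, ha0, ha1, haI⟩ : ∃ a : ℝ, 0 ≤ a ∧ a + ℓ ≤ 1 ∧
        ∀ u ∈ Set.Ioc a (a+ℓ), |u - x₀| ≤ ℓ := by
      rcases le_or_gt x₀ (1/2) with hc1 | hc1
      · refine ⟨x₀, hx₀.1, by linarith, fun u hu => ?_⟩
        rw [abs_le]
        exact ⟨by linarith [hu.1], by linarith [hu.2]⟩
      · refine ⟨x₀ - ℓ, by linarith, by linarith [hx₀.2], fun u hu => ?_⟩
        rw [abs_le]
        constructor
        · linarith [hu.1]
        · linarith [hu.2, hℓpos.le]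
    have hWlow : ∀ u ∈ Set.Ioc a (a+ℓ), c₀ ≤ WeylW ω u y N ^ (2*s) := by
      intro u hu
      have h1 : |WeylW ω u y N - WeylW ω x₀ y N| ≤ L * |u - x₀| := by
        rw [hLdef, hlgdef]
        exact weylW_lip ω y N u x₀
      have h2 : L * |u - x₀| ≤ L * ℓ := mul_le_mul_of_nonneg_left (haI u hu) hLpos.le
      have h3 : -(L * ℓ) ≤ WeylW ω u y N - WeylW ω x₀ y N := by
        have := neg_abs_le (WeylW ω u y N - WeylW ω x₀ y N)
        linarith
      have h4 : (N:ℝ)^α / 2 ≤ WeylW ω u y N := by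
        rw [hLℓ] at h3
        linarith
      exact Real.rpow_le_rpow (by positivity) h4 hs2
    have hcy : Continuous fun u : ℝ => WeylW ω u y N ^ (2*s) := by
      have h := hfcont.comp (Continuous.prodMk_left y)
      exact h
    exact integral_lower (fun u => WeylW ω u y N ^ (2*s)) hcy
      (fun u => Real.rpow_nonneg (weylW_nonneg ω u y N) _)
      a ℓ c₀ ha0 hℓpos ha1 hWlow
  -- the function F
  set F : ℝ → ℝ := fun v => ∫ u in Set.Ioc (0:ℝ) 1, WeylW ω u v N ^ (2*s) with hFdef
  have hFmeas : StronglyMeasurable F :=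
    hfcont.stronglyMeasurable.integral_prod_left'
  have hFnonneg : ∀ v, 0 ≤ F v := fun v =>
    integral_nonneg (fun u => Real.rpow_nonneg (weylW_nonneg ω u v N) _)
  have hFle : ∀ v, F v ≤ ((3:ℝ) * N^2) ^ (2*s) := by
    intro v
    have hb : ∀ u ∈ Set.Ioc (0:ℝ) 1, WeylW ω u v N ^ (2*s) ≤ ((3:ℝ) * N^2) ^ (2*s) :=
      fun u _ => Real.rpow_le_rpow (weylW_nonneg ω u v N) (weylW_le ω u v N) hs2
    have hmono : F v ≤ ∫ _ in Set.Ioc (0:ℝ) 1, ((3:ℝ) * N^2) ^ (2*s) := by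
      apply setIntegral_mono_on _ _ measurableSet_Ioc hb
      · have hcv : Continuous fun u : ℝ => WeylW ω u v N ^ (2*s) := by
          have h := hfcont.comp (Continuous.prodMk_left v)
          exact h
        exact hcv.integrableOn_Ioc
      · exact integrableOn_const (by simp [Real.volume_Ioc])
    refine hmono.trans (le_of_eq ?_)
    rw [setIntegral_const, Real.volume_real_Ioc_of_le zero_le_one, smul_eq_mul]
    norm_num
  have hFint : IntegrableOn F (Set.Icc (0:ℝ) 1) volume := by
    constructor
    · exact hFmeas.aestronglyMeasurable
    · apply HasFiniteIntegral.of_bounded (C := ((3:ℝ) * N^2) ^ (2*s))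
      exact ae_of_all _ (fun v => by
        rw [Real.norm_eq_abs, abs_of_nonneg (hFnonneg v)]; exact hFle v)
  -- bound the integral of F using the mean value hypothesis
  have hIF : (∫ v in Set.Icc (0:ℝ) 1, F v) ≤ Cδ * (N:ℝ) ^ (2*s - t + δ/2) := by
    rw [MeasureTheory.integral_Icc_eq_integral_Ioc]
    have h5 : (∫ v in Set.Ioc (0:ℝ) 1, F v)
        = ∫ v in (0:ℝ)..1, ∫ u in (0:ℝ)..1, WeylW ω u v N ^ (2*s) := by
      simp_rw [intervalIntegral.integral_of_le (zero_le_one (α := ℝ))]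
      rfl
    rw [h5, ← fubini_swap_box _ hfcont]
    exact hCδ N hN
  -- Markov / Chebyshev
  have hmeasIcc : MeasurableSet (Set.Icc (0:ℝ) 1) := measurableSet_Icc
  have step1 : volume {y : ℝ | y ∈ Set.Ico (0 : ℝ) 1 ∧
        ∃ x ∈ Set.Ico (0 : ℝ) 1, (N : ℝ) ^ α ≤ WeylW ω x y N}
      ≤ (volume.restrict (Set.Icc (0:ℝ) 1))
          {y : ℝ | ENNReal.ofReal (ℓ * c₀) ≤ ENNReal.ofReal (F y)} := by
    rw [Measure.restrict_apply' hmeasIcc]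
    apply measure_mono
    rintro y ⟨hy1, hy2⟩
    exact ⟨ENNReal.ofReal_le_ofReal (hFlow y hy2), Set.Ico_subset_Icc_self hy1⟩
  have step2 : (volume.restrict (Set.Icc (0:ℝ) 1))
        {y : ℝ | ENNReal.ofReal (ℓ * c₀) ≤ ENNReal.ofReal (F y)}
      ≤ (∫⁻ y, ENNReal.ofReal (F y) ∂(volume.restrict (Set.Icc (0:ℝ) 1)))
          / ENNReal.ofReal (ℓ * c₀) :=
    meas_ge_le_lintegral_div (hFmeas.measurable.ennreal_ofReal.aemeasurable)
      (by simp [ENNReal.ofReal_eq_zero, not_le, hcpos]) ENNReal.ofReal_ne_top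
  have step3 : (∫⁻ y, ENNReal.ofReal (F y) ∂(volume.restrict (Set.Icc (0:ℝ) 1)))
      = ENNReal.ofReal (∫ y in Set.Icc (0:ℝ) 1, F y) :=
    (ofReal_integral_eq_lintegral_ofReal hFint (ae_of_all _ hFnonneg)).symm
  -- final real-number inequality
  have hfinal : Cδ * (N:ℝ) ^ (2*s - t + δ/2)
      ≤ (Cδ * ((2:ℝ)^(2*s) * 8 * Real.pi * (2 + 4/δ)))
          * (N:ℝ) ^ (2 * s * (1 - α) - t + 2 - α + δ) * (ℓ * c₀) := by
    have hT2 : (0:ℝ) < (2:ℝ)^(2*s) := Real.rpow_pos_of_pos (by norm_num) _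
    have hc₀eq : c₀ = (N:ℝ)^(α*(2*s)) / (2:ℝ)^(2*s) := by
      rw [hc₀def, Real.div_rpow hNα_pos.le (by norm_num), Real.rpow_mul hNpos.le]
    have hkey : (N:ℝ) ^ (2*s - t + δ/2)
        ≤ ((2:ℝ)^(2*s) * 8 * Real.pi * (2 + 4/δ))
            * (N:ℝ) ^ (2 * s * (1 - α) - t + 2 - α + δ) * (ℓ * c₀) := by
      have heq : ((2:ℝ)^(2*s) * 8 * Real.pi * (2 + 4/δ))
            * (N:ℝ) ^ (2 * s * (1 - α) - t + 2 - α + δ) * (ℓ * c₀)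
          = (2 + 4/δ) * ((N:ℝ) ^ (2 * s * (1 - α) - t + 2 - α + δ)
              * (N:ℝ)^α * (N:ℝ)^(α*(2*s))) / ((N:ℝ)^2 * lg) := by
        rw [hc₀eq, hℓdef, hLdef]
        have hlgne : lg ≠ 0 := by linarith
        have hπne : Real.pi ≠ 0 := hπ.ne'
        have hNne : (N:ℝ) ≠ 0 := hNpos.ne'
        field_simp
        ring
      rw [heq, le_div_iff₀ (by positivity)]
      have hcomb : (N:ℝ) ^ (2 * s * (1 - α) - t + 2 - α + δ)
            * (N:ℝ)^α * (N:ℝ)^(α*(2*s)) = (N:ℝ) ^ (2*s - t + δ + 2) := by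
        rw [← Real.rpow_add hNpos, ← Real.rpow_add hNpos]
        congr 1
        ring
      rw [hcomb]
      have hN2 : ((N:ℝ))^2 = (N:ℝ)^((2:ℕ):ℝ) := (Real.rpow_natCast (N:ℝ) 2).symm
      calc (N:ℝ) ^ (2*s - t + δ/2) * ((N:ℝ)^2 * lg)
          ≤ (N:ℝ) ^ (2*s - t + δ/2) * ((N:ℝ)^2 * ((2 + 4/δ) * (N:ℝ)^(δ/2))) := by
            have hl := log_bound N hN δ hδ
            have h0 : (0:ℝ) ≤ (N:ℝ) ^ (2*s - t + δ/2) := Real.rpow_nonneg hNpos.le _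
            have h0' : (0:ℝ) ≤ ((N:ℝ))^2 := sq_nonneg _
            rw [hlgdef]
            apply mul_le_mul_of_nonneg_left _ h0
            apply mul_le_mul_of_nonneg_left _ h0'
            exact hl
        _ = (2 + 4/δ) * (N:ℝ) ^ (2*s - t + δ + 2) := by
            have hprod : (N:ℝ)^(2*s - t + δ/2) * (N:ℝ)^((2:ℕ):ℝ) * (N:ℝ)^(δ/2)
                = (N:ℝ)^(2*s - t + δ + 2) := by
              rw [← Real.rpow_add hNpos, ← Real.rpow_add hNpos]
              congr 1
              push_cast
              ring
            rw [hN2, ← hprod]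
            ring
    calc Cδ * (N:ℝ) ^ (2*s - t + δ/2)
        ≤ Cδ * (((2:ℝ)^(2*s) * 8 * Real.pi * (2 + 4/δ))
            * (N:ℝ) ^ (2 * s * (1 - α) - t + 2 - α + δ) * (ℓ * c₀)) :=
          mul_le_mul_of_nonneg_left hkey hCδ0
      _ = (Cδ * ((2:ℝ)^(2*s) * 8 * Real.pi * (2 + 4/δ)))
            * (N:ℝ) ^ (2 * s * (1 - α) - t + 2 - α + δ) * (ℓ * c₀) := by ring
  -- put everything together
  have hC'0 : 0 ≤ Cδ * ((2:ℝ)^(2*s) * 8 * Real.pi * (2 + 4/δ)) := by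
    have hT2 : (0:ℝ) < (2:ℝ)^(2*s) := Real.rpow_pos_of_pos (by norm_num) _
    have : (0:ℝ) ≤ (2:ℝ)^(2*s) * 8 * Real.pi * (2 + 4/δ) := by positivity
    exact mul_nonneg hCδ0 this
  calc volume {y : ℝ | y ∈ Set.Ico (0 : ℝ) 1 ∧
        ∃ x ∈ Set.Ico (0 : ℝ) 1, (N : ℝ) ^ α ≤ WeylW ω x y N}
      ≤ (volume.restrict (Set.Icc (0:ℝ) 1))
          {y : ℝ | ENNReal.ofReal (ℓ * c₀) ≤ ENNReal.ofReal (F y)} := step1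
    _ ≤ (∫⁻ y, ENNReal.ofReal (F y) ∂(volume.restrict (Set.Icc (0:ℝ) 1)))
          / ENNReal.ofReal (ℓ * c₀) := step2
    _ = ENNReal.ofReal (∫ y in Set.Icc (0:ℝ) 1, F y) / ENNReal.ofReal (ℓ * c₀) := by
        rw [step3]
    _ ≤ ENNReal.ofReal (Cδ * (N:ℝ) ^ (2*s - t + δ/2)) / ENNReal.ofReal (ℓ * c₀) := by
        exact ENNReal.div_le_div_right (ENNReal.ofReal_le_ofReal hIF) _
    _ ≤ ENNReal.ofReal ((Cδ * ((2:ℝ)^(2*s) * 8 * Real.pi * (2 + 4/δ)))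
          * (N:ℝ) ^ (2 * s * (1 - α) - t + 2 - α + δ)) := by
        apply ENNReal.div_le_of_le_mul
        have hCN0 : 0 ≤ (Cδ * ((2:ℝ)^(2*s) * 8 * Real.pi * (2 + 4/δ)))
            * (N:ℝ) ^ (2 * s * (1 - α) - t + 2 - α + δ) :=
          mul_nonneg hC'0 (Real.rpow_nonneg hNpos.le _)
        rw [← ENNReal.ofReal_mul hCN0]
        apply ENNReal.ofReal_le_ofReal
        calc Cδ * (N:ℝ) ^ (2*s - t + δ/2)
            ≤ (Cδ * ((2:ℝ)^(2*s) * 8 * Real.pi * (2 + 4/δ)))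
                * (N:ℝ) ^ (2 * s * (1 - α) - t + 2 - α + δ) * (ℓ * c₀) := hfinal
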